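/- Let p be a prime and k ≥ 1, and let σ be the regular p^k-cycle on ZMod (p^k) given by σ(i) = i + 1. If W is an abelian subgroup of Perm(ZMod (p^k)) normalized by σ (that is, σ⁻¹ W σ = W), then there is a Sylow p-subgroup of Perm(ZMod (p^k)) containing both σ and W; in particular W is a p-group. -/

import Mathlib

section Aux

variable {p k : ℕ}

open Equiv MulAction

private lemma aux_orderOf_conj {G : Type*} [Group G] (g w : G) :
    orderOf (g * w * g⁻¹) = orderOf w := by
  simpa [MulAut.conj_apply] using
    orderOf_injective (MulAut.conj g).toMonoidHom (MulEquiv.injective _) w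

end Aux

/-- Let `p` be a prime, `k ≥ 1`, and let `σ` be the regular `p^k`-cycle on `ZMod (p^k)`
given by `σ(i) = i + 1`.  If `W` is an abelian subgroup of `Perm (ZMod (p^k))` normalized
by `σ` (i.e. `σ⁻¹ W σ = W`), then there is a Sylow `p`-subgroup containing both `σ` and
`W`; in particular `W` is a `p`-group. -/
theorem stmt10 (p k : ℕ) (hp : p.Prime) (hk : 1 ≤ k)
    (W : Subgroup (Equiv.Perm (ZMod (p ^ k))))
    (hcomm : ∀ x ∈ W, ∀ y ∈ W, x * y = y * x)
    (hnorm : ∀ w : Equiv.Perm (ZMod (p ^ k)),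
      w ∈ W ↔ (Equiv.addRight (1 : ZMod (p ^ k)))⁻¹ * w *
        Equiv.addRight (1 : ZMod (p ^ k)) ∈ W) :
    (∃ P : Sylow p (Equiv.Perm (ZMod (p ^ k))),
      Equiv.addRight (1 : ZMod (p ^ k)) ∈ P ∧
        W ≤ (P : Subgroup (Equiv.Perm (ZMod (p ^ k))))) ∧
    IsPGroup p W := by
  classical
  haveI : Fact p.Prime := ⟨hp⟩
  haveI : NeZero (p ^ k) := ⟨pow_ne_zero k hp.ne_zero⟩
  set σ : Equiv.Perm (ZMod (p ^ k)) := Equiv.addRight (1 : ZMod (p ^ k)) with hσdef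
  -- basic facts about powers of σ
  have hσapp : ∀ x : ZMod (p ^ k), σ x = x + 1 := fun x => rfl
  have hpow : ∀ (n : ℕ) (x : ZMod (p ^ k)), (σ ^ n) x = x + n := by
    intro n
    induction n with
    | zero => intro x; simp
    | succ n ih =>
      intro x
      rw [pow_succ]
      have : (σ ^ n * σ) x = (σ ^ n) (σ x) := rfl
      rw [this, hσapp, ih]
      push_cast
      ring
  have hpowinv : ∀ (n : ℕ) (x : ZMod (p ^ k)), (σ ^ n)⁻¹ x = x - n := by
    intro n x
    apply (σ ^ n).injective
    rw [← Equiv.Perm.mul_apply, mul_inv_cancel, Equiv.Perm.one_apply, hpow]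
    ring
  have hσpk : σ ^ (p ^ k) = 1 := by
    ext x
    rw [hpow]
    simp
  -- conjugation by σ preserves W, in both directions
  have hconj1 : ∀ w ∈ W, σ * w * σ⁻¹ ∈ W := by
    intro w hw
    rw [hnorm]
    have : σ⁻¹ * (σ * w * σ⁻¹) * σ = w := by group
    rwa [this]
  have hconj1' : ∀ w ∈ W, σ⁻¹ * w * σ ∈ W := fun w hw => (hnorm w).mp hw
  -- the p'-torsion subgroup of W
  let W' : Subgroup (Equiv.Perm (ZMod (p ^ k))) :=
    { carrier := {w | w ∈ W ∧ ¬ p ∣ orderOf w}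
      one_mem' := ⟨W.one_mem, by simpa using hp.one_lt.ne'⟩
      mul_mem' := by
        rintro a b ⟨haW, hao⟩ ⟨hbW, hbo⟩
        refine ⟨W.mul_mem haW hbW, fun hdvd => ?_⟩
        have hcab : Commute a b := hcomm a haW b hbW
        have h1 : orderOf (a * b) ∣ orderOf a * orderOf b :=
          hcab.orderOf_mul_dvd_lcm.trans (Nat.lcm_dvd_mul _ _)
        rcases hp.dvd_mul.mp (hdvd.trans h1) with h | h
        · exact hao h
        · exact hbo h
      inv_mem' := by
        rintro a ⟨haW, hao⟩
        exact ⟨W.inv_mem haW, by simpa using hao⟩ }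
  have hW'mem : ∀ w, w ∈ W' ↔ w ∈ W ∧ ¬ p ∣ orderOf w := fun w => Iff.rfl
  -- conjugation by powers of σ preserves W'
  have hconjW' : ∀ (n : ℕ) (w : Equiv.Perm (ZMod (p ^ k))), w ∈ W' →
      σ ^ n * w * (σ ^ n)⁻¹ ∈ W' := by
    intro n
    induction n with
    | zero => intro w hw; simpa using hw
    | succ n ih =>
      intro w hw
      have key : σ ^ (n + 1) * w * (σ ^ (n + 1))⁻¹ =
          σ * (σ ^ n * w * (σ ^ n)⁻¹) * σ⁻¹ := by group
      rw [key]
      obtain ⟨h1, h2⟩ := ih w hw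
      refine ⟨hconj1 _ h1, ?_⟩
      rwa [aux_orderOf_conj]
  have hconjW'' : ∀ (n : ℕ) (w : Equiv.Perm (ZMod (p ^ k))), w ∈ W' →
      (σ ^ n)⁻¹ * w * σ ^ n ∈ W' := by
    intro n
    induction n with
    | zero => intro w hw; simpa using hw
    | succ n ih =>
      intro w hw
      have key : (σ ^ (n + 1))⁻¹ * w * σ ^ (n + 1) =
          (σ ^ n)⁻¹ * (σ⁻¹ * w * σ) * σ ^ n := by group
      rw [key]
      have h1 : σ⁻¹ * w * σ ∈ W' := by
        obtain ⟨hw1, hw2⟩ := hw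
        refine ⟨hconj1' _ hw1, ?_⟩
        have : σ⁻¹ * w * σ = σ⁻¹ * w * (σ⁻¹)⁻¹ := by group
        rwa [this, aux_orderOf_conj]
      exact ih _ h1
  -- the orbit of 0 under W'
  set S : Set (ZMod (p ^ k)) := MulAction.orbit W' (0 : ZMod (p ^ k)) with hSdef
  have hsmul : ∀ (w : W') (x : ZMod (p ^ k)), w • x = (w : Equiv.Perm (ZMod (p ^ k))) x :=
    fun w x => rfl
  have hS0 : (0 : ZMod (p ^ k)) ∈ S := MulAction.mem_orbit_self 0
  have hSadd : ∀ s ∈ S, ∀ t ∈ S, s + t ∈ S := by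
    rintro s ⟨w, hws⟩ t ⟨v, hvt⟩
    set n : ℕ := t.val with hndef
    have hn : (n : ZMod (p ^ k)) = t := ZMod.natCast_rightInverse t
    have humem : σ ^ n * (w : Equiv.Perm (ZMod (p ^ k))) * (σ ^ n)⁻¹ *
        (v : Equiv.Perm (ZMod (p ^ k))) ∈ W' :=
      W'.mul_mem (hconjW' n _ w.2) v.2
    refine ⟨⟨_, humem⟩, ?_⟩
    have hws' : (w : Equiv.Perm (ZMod (p ^ k))) 0 = s := hws
    have hvt' : (v : Equiv.Perm (ZMod (p ^ k))) 0 = t := hvt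
    show (σ ^ n) ((w : Equiv.Perm (ZMod (p ^ k)))
      ((σ ^ n)⁻¹ ((v : Equiv.Perm (ZMod (p ^ k))) 0))) = s + t
    rw [hvt', hpowinv, hn, sub_self, hws', hpow, hn]
  have hSnsmul : ∀ (m : ℕ), ∀ s ∈ S, m • s ∈ S := by
    intro m
    induction m with
    | zero => intro s _; simpa using hS0
    | succ m ih =>
      intro s hs
      rw [succ_nsmul]
      exact hSadd _ (ih s hs) _ hs
  have hSneg : ∀ s ∈ S, -s ∈ S := by
    intro s hs
    have hc : 1 ≤ addOrderOf s := (addOrderOf_pos s)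
    have h1 : (addOrderOf s - 1) • s + s = 0 := by
      rw [← succ_nsmul, Nat.sub_add_cancel hc, addOrderOf_nsmul_eq_zero]
    have h2 : -s = (addOrderOf s - 1) • s := neg_eq_of_add_eq_zero_left h1
    rw [h2]
    exact hSnsmul _ s hs
  let SG : AddSubgroup (ZMod (p ^ k)) :=
    { carrier := S
      zero_mem' := hS0
      add_mem' := fun ha hb => hSadd _ ha _ hb
      neg_mem' := fun ha => hSneg _ ha }
  -- cardinality arguments
  have hcard1 : Nat.card S ∣ p ^ k := by
    have := AddSubgroup.card_addSubgroup_dvd_card SG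
    rwa [Nat.card_zmod] at this
  have hcardW' : ¬ p ∣ Nat.card W' := by
    intro hdvd
    rw [Nat.card_eq_fintype_card] at hdvd
    obtain ⟨g, hg⟩ := exists_prime_orderOf_dvd_card p hdvd
    have := g.2.2
    rw [Subgroup.orderOf_coe, hg] at this
    exact this dvd_rfl
  have hcard2 : Nat.card S ∣ Nat.card W' := by
    have h := Nat.card_congr (MulAction.orbitEquivQuotientStabilizer W' (0 : ZMod (p ^ k)))
    rw [← hSdef] at h
    rw [h]
    exact Subgroup.card_quotient_dvd_card _
  have hcardS : Nat.card S = 1 := by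
    obtain ⟨i, hile, hi⟩ := (Nat.dvd_prime_pow hp).mp hcard1
    rcases Nat.eq_zero_or_pos i with hi0 | hipos
    · rw [hi, hi0, pow_zero]
    · exfalso
      apply hcardW'
      refine dvd_trans ?_ hcard2
      rw [hi]
      exact dvd_pow_self p hipos.ne'
  have hStriv : ∀ s ∈ S, s = 0 := by
    intro s hs
    obtain ⟨x, hx⟩ := Nat.card_eq_one_iff_exists.mp hcardS
    have h1 : (⟨s, hs⟩ : S) = x := hx _
    have h2 : (⟨0, hS0⟩ : S) = x := hx _
    have := h1.trans h2.symm
    exact congrArg Subtype.val this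
  -- W' is trivial
  have hW'triv : ∀ w ∈ W', w = 1 := by
    intro w hw
    ext x
    set n : ℕ := x.val with hndef
    have hn : (n : ZMod (p ^ k)) = x := ZMod.natCast_rightInverse x
    have hw' : (σ ^ n)⁻¹ * w * σ ^ n ∈ W' := hconjW'' n w hw
    have hmem : ((σ ^ n)⁻¹ * w * σ ^ n) 0 ∈ S := ⟨⟨_, hw'⟩, rfl⟩
    have h0 : ((σ ^ n)⁻¹ * w * σ ^ n) 0 = 0 := hStriv _ hmem
    have h1 : ((σ ^ n)⁻¹ * w * σ ^ n) 0 = (σ ^ n)⁻¹ (w ((σ ^ n) 0)) := rfl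
    rw [h1, hpow, hpowinv, zero_add, hn] at h0
    have hx : w x = x := sub_eq_zero.mp h0
    rw [hx]
    rfl
  -- W is a p-group
  have hWp : IsPGroup p W := by
    rintro ⟨w, hw⟩
    set m := orderOf w with hm
    have hmpos : m ≠ 0 := (orderOf_pos w).ne'
    refine ⟨m.factorization p, ?_⟩
    have hproj : p ^ m.factorization p ∣ m := Nat.ordProj_dvd m p
    have hgcd : Nat.gcd m (p ^ m.factorization p) = p ^ m.factorization p :=
      Nat.gcd_eq_right hproj
    have horder : orderOf (w ^ p ^ m.factorization p) = m / p ^ m.factorization p := by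
      rw [orderOf_pow, ← hm, hgcd]
    have hmem' : w ^ p ^ m.factorization p ∈ W' := by
      refine ⟨W.pow_mem hw _, ?_⟩
      rw [horder]
      exact Nat.not_dvd_ordCompl hp hmpos
    have hone : w ^ p ^ m.factorization p = 1 := hW'triv _ hmem'
    exact Subtype.ext (by push_cast [hone]; rfl)
  -- ⟨σ⟩ is a p-group
  have hσp : IsPGroup p (Subgroup.zpowers σ) := by
    rintro ⟨g, hg⟩
    obtain ⟨m, rfl⟩ := hg
    refine ⟨k, Subtype.ext ?_⟩
    push_cast
    rw [← zpow_natCast (σ ^ m), ← zpow_mul, mul_comm, zpow_mul, zpow_natCast, hσpk, one_zpow]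
  -- σ normalizes W
  have hσnorm : σ ∈ Subgroup.normalizer (W : Set (Equiv.Perm (ZMod (p ^ k)))) := by
    rw [Subgroup.mem_normalizer_iff]
    intro h
    constructor
    · exact hconj1 h
    · intro hh
      have := hconj1' _ hh
      have key : σ⁻¹ * (σ * h * σ⁻¹) * σ = h := by group
      rwa [key] at this
  have hsup : IsPGroup p ((Subgroup.zpowers σ) ⊔ W : Subgroup (Equiv.Perm (ZMod (p ^ k)))) := by
    refine IsPGroup.to_sup_of_normal_right' hσp hWp ?_
    rw [Subgroup.zpowers_le]
    exact hσnorm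
  obtain ⟨P, hP⟩ := hsup.exists_le_sylow
  refine ⟨⟨P, ?_, ?_⟩, hWp⟩
  · exact hP (Subgroup.mem_sup_left (Subgroup.mem_zpowers σ))
  · exact le_trans le_sup_right hP
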